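/- Let d > 0 and φ : ℤ → ℝ be bounded, and set a_n = n/d + φ(n), assuming a_n ≠ 0 for all n ∈ ℤ. Then the limit lim_{N→∞} Σ_{|a_n| < N} 1/a_n exists and is finite. -/

import Mathlib

open Filter

/-- for `a n = n/d + φ(n)` with `d > 0`, `φ` bounded and `0 ∉ {a n}`,
the limit `lim_{N→∞} Σ_{|a n| < N} 1/a n` exists and is finite. -/
theorem sum_reciprocal_zeros_converges (d : ℝ) (hd : 0 < d) (φ : ℤ → ℝ)
    (C : ℝ) (hφ : ∀ n : ℤ, |φ n| ≤ C)
    (a : ℤ → ℝ) (ha : ∀ n : ℤ, a n = n / d + φ n)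
    (h0 : ∀ n : ℤ, a n ≠ 0) :
    ∃ l : ℝ, Tendsto (fun N : ℕ => ∑ᶠ n ∈ {n : ℤ | |a n| < (N : ℝ)}, (a n)⁻¹)
      atTop (nhds l) := by
  have hC0 : 0 ≤ C := le_trans (abs_nonneg _) (hφ 0)
  -- upper and lower bounds on |a n|
  have hub : ∀ n : ℤ, |a n| ≤ |(n : ℝ)| / d + C := by
    intro n
    rw [ha]
    calc |(n : ℝ) / d + φ n| ≤ |(n : ℝ) / d| + |φ n| := abs_add_le _ _
      _ ≤ |(n : ℝ)| / d + C := by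
          rw [abs_div, abs_of_pos hd]; exact add_le_add le_rfl (hφ n)
  have hlb : ∀ n : ℤ, |(n : ℝ)| / d - C ≤ |a n| := by
    intro n
    have h1 : |(n : ℝ) / d| - |(-(φ n))| ≤ |(n : ℝ) / d - (-(φ n))| :=
      abs_sub_abs_le_abs_sub _ _
    rw [ha]
    rw [abs_neg, sub_neg_eq_add, abs_div, abs_of_pos hd] at h1
    exact le_trans (sub_le_sub_left (hφ n) _) h1
  -- the paired series
  set g : ℕ → ℝ := fun m => if m = 0 then (a 0)⁻¹ else (a m)⁻¹ + (a (-(m : ℤ)))⁻¹ with hg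
  have hpair : ∀ n : ℤ, a n + a (-n) = φ n + φ (-n) := by
    intro n
    rw [ha, ha]
    push_cast
    ring
  have hgsum : Summable g := by
    have hbase : Summable (fun n : ℕ => ((n : ℝ) ^ 2)⁻¹) := by
      have := Real.summable_one_div_nat_pow.mpr (show 1 < 2 by norm_num)
      simpa [one_div] using this
    apply summable_of_isBigO_nat hbase
    rw [Asymptotics.isBigO_iff]
    refine ⟨8 * C * d ^ 2, ?_⟩
    filter_upwards [eventually_ge_atTop (⌈2 * d * C⌉₊ + 1)] with n hn
    have hn0 : n ≠ 0 := by omega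
    have hnR : 2 * d * C ≤ (n : ℝ) := by
      calc 2 * d * C ≤ (⌈2 * d * C⌉₊ : ℝ) := Nat.le_ceil _
        _ ≤ (n : ℝ) := by exact_mod_cast le_trans (Nat.le_succ _) hn
    have hnpos : (0 : ℝ) < n := by positivity
    have hlow : ∀ m : ℤ, |(m : ℝ)| = (n : ℝ) → (n : ℝ) / (2 * d) ≤ |a m| := by
      intro m hm
      have := hlb m
      rw [hm] at this
      have h2 : (n : ℝ) / (2 * d) ≤ (n : ℝ) / d - C := by
        rw [div_sub' hd.ne', div_le_div_iff₀ (by positivity) hd]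
        nlinarith
      linarith
    have hA : (n : ℝ) / (2 * d) ≤ |a (n : ℤ)| := hlow n (by simp [abs_of_nonneg hnpos.le])
    have hB : (n : ℝ) / (2 * d) ≤ |a (-(n : ℤ))| := by
      apply hlow
      push_cast
      rw [abs_neg, abs_of_nonneg hnpos.le]
    have hgn : g n = (a (n : ℤ) + a (-(n : ℤ))) / (a (n : ℤ) * a (-(n : ℤ))) := by
      simp only [hg, if_neg hn0]
      rw [inv_add_inv (h0 _) (h0 _)]
    have hnum : |a (n : ℤ) + a (-(n : ℤ))| ≤ 2 * C := by
      rw [hpair]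
      calc |φ (n : ℤ) + φ (-(n : ℤ))| ≤ |φ (n : ℤ)| + |φ (-(n : ℤ))| := abs_add_le _ _
        _ ≤ 2 * C := by linarith [hφ (n : ℤ), hφ (-(n : ℤ))]
    have hden : ((n : ℝ) / (2 * d)) ^ 2 ≤ |a (n : ℤ) * a (-(n : ℤ))| := by
      rw [abs_mul, sq]
      exact mul_le_mul hA hB (by positivity) (abs_nonneg _)
    have hdpos : (0 : ℝ) < ((n : ℝ) / (2 * d)) ^ 2 := by positivity
    have hmain : |g n| ≤ 2 * C / ((n : ℝ) / (2 * d)) ^ 2 := by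
      rw [hgn, abs_div]
      exact div_le_div₀ (by linarith) hnum hdpos hden
    have heq : 2 * C / ((n : ℝ) / (2 * d)) ^ 2 = 8 * C * d ^ 2 * ((n : ℝ) ^ 2)⁻¹ := by
      field_simp
      ring
    have hnorm : ‖((n : ℝ) ^ 2)⁻¹‖ = ((n : ℝ) ^ 2)⁻¹ := by
      rw [Real.norm_eq_abs, abs_of_nonneg (by positivity)]
    rw [Real.norm_eq_abs, hnorm, ← heq]
    exact hmain
  set L : ℝ := ∑' m, g m with hL
  have hLt : Tendsto (fun K : ℕ => ∑ m ∈ Finset.range K, g m) atTop (nhds L) :=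
    hgsum.hasSum.tendsto_sum_nat
  -- partial sums of g are symmetric sums
  have hGK : ∀ k : ℕ, ∑ m ∈ Finset.range (k + 1), g m
      = ∑ n ∈ Finset.Icc (-(k : ℤ)) (k : ℤ), (a n)⁻¹ := by
    intro k
    induction k with
    | zero => simp [hg]
    | succ k ih =>
      rw [Finset.sum_range_succ, ih]
      have hset : Finset.Icc (-((k:ℤ) + 1)) ((k:ℤ) + 1)
          = insert (-((k:ℤ) + 1)) (insert ((k:ℤ) + 1) (Finset.Icc (-(k:ℤ)) (k:ℤ))) := by
        ext m
        simp only [Finset.mem_Icc, Finset.mem_insert]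
        omega
      have h1 : ((k:ℤ) + 1) ∉ Finset.Icc (-(k:ℤ)) (k:ℤ) := by
        simp only [Finset.mem_Icc]; omega
      have h2 : (-((k:ℤ) + 1)) ∉ insert ((k:ℤ) + 1) (Finset.Icc (-(k:ℤ)) (k:ℤ)) := by
        simp only [Finset.mem_insert, Finset.mem_Icc]; omega
      have hgk : g (k + 1) = (a ((k:ℤ) + 1))⁻¹ + (a (-((k:ℤ) + 1)))⁻¹ := by
        simp only [hg]
        norm_num
      push_cast
      rw [hset, Finset.sum_insert h2, Finset.sum_insert h1, hgk]
      push_cast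
      ring
  -- the cut-off index
  set K : ℕ → ℕ := fun N => ⌈d * ((N : ℝ) + C)⌉₊ with hK
  -- the finite set realizing {n | |a n| < N}
  set T : ℕ → Finset ℤ := fun N =>
    (Finset.Icc (-(K N : ℤ)) (K N : ℤ)).filter (fun n => |a n| < (N : ℝ)) with hT
  have hST : ∀ N : ℕ, {n : ℤ | |a n| < (N : ℝ)} = ↑(T N) := by
    intro N
    ext n
    simp only [Set.mem_setOf_eq, hT, Finset.coe_filter, Finset.mem_Icc, Set.mem_setOf_eq]
    constructor
    · intro h
      refine ⟨?_, h⟩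
      have h1 : |(n : ℝ)| / d - C ≤ |a n| := hlb n
      have h2 : |(n : ℝ)| ≤ d * ((N : ℝ) + C) := by
        rw [div_sub' hd.ne', div_le_iff₀ hd] at h1
        nlinarith [h1, h]
      have h3 : |(n : ℝ)| ≤ ((K N : ℕ) : ℝ) := le_trans h2 (Nat.le_ceil _)
      have h4 : |n| ≤ ((K N : ℕ) : ℤ) := by
        have h5 : ((|n| : ℤ) : ℝ) ≤ ((K N : ℕ) : ℝ) := by push_cast; exact h3
        exact_mod_cast h5
      rw [abs_le] at h4
      exact h4
    · exact fun h => h.2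
  have hfin : ∀ N : ℕ, (∑ᶠ n ∈ {n : ℤ | |a n| < (N : ℝ)}, (a n)⁻¹)
      = ∑ n ∈ T N, (a n)⁻¹ := by
    intro N; rw [hST N]; exact finsum_mem_coe_finset _ _
  -- main error estimate
  have herr : ∀ᶠ N : ℕ in atTop,
      |(∑ n ∈ Finset.Icc (-(K N : ℤ)) (K N : ℤ), (a n)⁻¹) - ∑ n ∈ T N, (a n)⁻¹|
        ≤ (4 * d * C + 4) / N := by
    filter_upwards [eventually_ge_atTop 1,
      tendsto_natCast_atTop_atTop.eventually_ge_atTop (C + 2 / d)] with N hN1 hN2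
    have hNpos : (0 : ℝ) < N := by exact_mod_cast hN1
    set J : ℤ := ⌈d * ((N : ℝ) - C)⌉ - 1 with hJ
    have hJlb : d * ((N : ℝ) - C) - 1 ≤ (J : ℝ) := by
      push_cast [hJ]
      linarith [Int.le_ceil (d * ((N : ℝ) - C))]
    have hJub : (J : ℝ) < d * ((N : ℝ) - C) := by
      push_cast [hJ]
      linarith [Int.ceil_lt_add_one (d * ((N : ℝ) - C))]
    have hdN : 2 ≤ d * ((N : ℝ) - C) := by
      have : 2 / d ≤ (N : ℝ) - C := by linarith
      calc (2 : ℝ) = d * (2 / d) := by field_simp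
        _ ≤ d * ((N : ℝ) - C) := by
            exact mul_le_mul_of_nonneg_left this hd.le
    have hJ0 : 0 ≤ J := by
      have : (0 : ℝ) ≤ (J : ℝ) := by linarith
      exact_mod_cast this
    have hKub : ((K N : ℕ) : ℝ) ≤ d * ((N : ℝ) + C) + 1 := by
      have := Nat.ceil_lt_add_one (show (0:ℝ) ≤ d * ((N : ℝ) + C) by positivity)
      simp only [hK]
      linarith
    have hJK : J ≤ ((K N : ℕ) : ℤ) := by
      have : (J : ℝ) ≤ ((K N : ℕ) : ℝ) := by
        have := Nat.le_ceil (d * ((N : ℝ) + C))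
        simp only [hK] at *
        nlinarith
      exact_mod_cast this
    -- the difference is the sum over D
    have hTsub : T N ⊆ Finset.Icc (-(K N : ℤ)) (K N : ℤ) := Finset.filter_subset _ _
    set D : Finset ℤ := Finset.Icc (-(K N : ℤ)) (K N : ℤ) \ T N with hD
    have hdiff : (∑ n ∈ Finset.Icc (-(K N : ℤ)) (K N : ℤ), (a n)⁻¹) - ∑ n ∈ T N, (a n)⁻¹
        = ∑ n ∈ D, (a n)⁻¹ := (Finset.sum_sdiff_eq_sub hTsub).symm
    -- each term in D is small
    have hterm : ∀ n ∈ D, |(a n)⁻¹| ≤ ((N : ℝ))⁻¹ := by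
      intro n hn
      rw [hD, Finset.mem_sdiff, hT, Finset.mem_filter, not_and] at hn
      have hge : (N : ℝ) ≤ |a n| := le_of_not_gt (hn.2 hn.1)
      rw [abs_inv]
      exact inv_anti₀ hNpos hge
    -- each n in D has |n| > J
    have hDJ : ∀ n ∈ D, n ∉ Finset.Icc (-J) J := by
      intro n hn
      rw [hD, Finset.mem_sdiff, hT, Finset.mem_filter, not_and] at hn
      have hge : (N : ℝ) ≤ |a n| := le_of_not_gt (hn.2 hn.1)
      have h1 : d * ((N : ℝ) - C) ≤ |(n : ℝ)| := by
        have h2 : (N : ℝ) - C ≤ |(n : ℝ)| / d := by linarith [hub n]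
        calc d * ((N : ℝ) - C) ≤ d * (|(n : ℝ)| / d) := mul_le_mul_of_nonneg_left h2 hd.le
          _ = |(n : ℝ)| := by field_simp
      have h3 : J < |n| := by
        have h4 : (J : ℝ) < ((|n| : ℤ) : ℝ) := by push_cast; linarith
        exact_mod_cast h4
      rw [lt_abs] at h3
      simp only [Finset.mem_Icc]
      omega
    -- cardinality bound
    have hcard : (D.card : ℝ) ≤ 4 * d * C + 4 := by
      have hdisj : Disjoint D (Finset.Icc (-J) J) :=
        Finset.disjoint_left.mpr fun n hn hn' => hDJ n hn hn'
      have hsub : D ∪ Finset.Icc (-J) J ⊆ Finset.Icc (-(K N : ℤ)) (K N : ℤ) := by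
        apply Finset.union_subset (Finset.sdiff_subset)
        intro n hn
        simp only [Finset.mem_Icc] at hn ⊢
        omega
      have hcards := Finset.card_le_card hsub
      rw [Finset.card_union_of_disjoint hdisj, Int.card_Icc, Int.card_Icc] at hcards
      have hInt : (D.card : ℤ) + (2 * J + 1) ≤ 2 * (K N : ℤ) + 1 := by omega
      have hcR : (D.card : ℝ) + (2 * (J : ℝ) + 1) ≤ 2 * ((K N : ℕ) : ℝ) + 1 := by
        exact_mod_cast hInt
      linarith
    rw [hdiff]
    calc |∑ n ∈ D, (a n)⁻¹| ≤ ∑ n ∈ D, |(a n)⁻¹| := Finset.abs_sum_le_sum_abs _ _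
      _ ≤ ∑ _n ∈ D, ((N : ℝ))⁻¹ := Finset.sum_le_sum hterm
      _ = (D.card : ℝ) * ((N : ℝ))⁻¹ := by rw [Finset.sum_const, nsmul_eq_mul]
      _ ≤ (4 * d * C + 4) * ((N : ℝ))⁻¹ := by
          apply mul_le_mul_of_nonneg_right hcard (by positivity)
      _ = (4 * d * C + 4) / N := by rw [div_eq_mul_inv]
  -- conclude
  refine ⟨L, ?_⟩
  have h1 : Tendsto (fun N : ℕ => ∑ n ∈ Finset.Icc (-(K N : ℤ)) (K N : ℤ), (a n)⁻¹)
      atTop (nhds L) := by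
    have hKt : Tendsto (fun N : ℕ => K N + 1) atTop atTop := by
      have h1 : Tendsto (fun N : ℕ => d * ((N : ℝ) + C)) atTop atTop := by
        apply Tendsto.const_mul_atTop hd
        exact tendsto_atTop_add_const_right _ _ tendsto_natCast_atTop_atTop
      exact tendsto_atTop_mono (fun N => Nat.le_succ (K N)) (tendsto_nat_ceil_atTop.comp h1)
    have := hLt.comp hKt
    refine this.congr ?_
    intro N
    simp only [Function.comp_apply, hGK (K N)]
  have h2 : Tendsto (fun N : ℕ =>
      (∑ n ∈ Finset.Icc (-(K N : ℤ)) (K N : ℤ), (a n)⁻¹) - ∑ n ∈ T N, (a n)⁻¹)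
      atTop (nhds 0) := by
    apply squeeze_zero_norm' herr
    exact tendsto_const_div_atTop_nhds_zero_nat _
  have h3 := h1.sub h2
  simp only [sub_sub_cancel] at h3
  rw [sub_zero] at h3
  refine h3.congr ?_
  intro N
  rw [hfin N]
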